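/- arXiv:1608.04916 — 8 statements merged into one kernel-verified Lean document; each statement's English description precedes it below -/
import Mathlib

section
/- Let A be a finite set of integers with min(A) = 0 and gcd of the elements of A equal to 1 (A is in normal form). If A is a stable set, i.e. 2A ∩ [0, max(A)] = A and neither 1 nor max(A)−1 belongs to A, then for every x with 0 ≤ x ≤ max(A), the number of elements of A in [0,x] is at most ⌈(x+1)/2⌉. -/
open Finset Pointwise

/-- If `A` is a stable set in normal form, then for every `x` with
`0 ≤ x ≤ max A`, the number of elements of `A` in `[0,x]` is at most `⌈(x+1)/2⌉`. -/
theorem stable_initial_segment_density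
    (A : Finset ℤ) (a : ℤ)
    (h0 : 0 ∈ A) (hnn : ∀ y ∈ A, 0 ≤ y) (hgcd : A.gcd id = 1)
    (ha : IsGreatest (A : Set ℤ) a)
    (hstable : (A + A) ∩ Finset.Icc 0 a = A)
    (h1 : (1 : ℤ) ∉ A) (h2 : a - 1 ∉ A) :
    ∀ x : ℤ, 0 ≤ x → x ≤ a →
      ((A ∩ Finset.Icc 0 x).card : ℤ) ≤ ⌈((x : ℚ) + 1) / 2⌉ := by
  have ha0 : 0 ≤ a := ha.2 h0
  have hsum : ∀ s t : ℤ, s ∈ A → t ∈ A → s + t ≤ a → s + t ∈ A := by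
    intro s t hs ht hst
    have hmem : s + t ∈ (A + A) ∩ Finset.Icc 0 a := by
      refine Finset.mem_inter.mpr ⟨Finset.add_mem_add hs ht, ?_⟩
      exact Finset.mem_Icc.mpr ⟨by linarith [hnn s hs, hnn t ht], hst⟩
    rwa [hstable] at hmem
  -- Key reflection lemma: around any gap m, A∩[0,m] pairs with gaps.
  have key : ∀ m : ℤ, 0 ≤ m → m ≤ a → m ∉ A →
      2 * ((A ∩ Finset.Icc 0 m).card : ℤ) ≤ m + 1 := by
    intro m hm0 hma hmA
    set B := A ∩ Finset.Icc 0 m with hB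
    have hBsub : B ⊆ Finset.Icc 0 m := Finset.inter_subset_right
    have himg : B.image (fun s => m - s) ⊆ Finset.Icc 0 m := by
      intro t ht
      simp only [Finset.mem_image] at ht
      obtain ⟨s, hs, rfl⟩ := ht
      have hsI := Finset.mem_Icc.mp (hBsub hs)
      exact Finset.mem_Icc.mpr ⟨by linarith [hsI.2], by linarith [hsI.1]⟩
    have hdisj : Disjoint B (B.image (fun s => m - s)) := by
      rw [Finset.disjoint_left]
      intro t htB htI
      simp only [Finset.mem_image] at htI
      obtain ⟨s, hs, hts⟩ := htI
      have hsA : s ∈ A := (Finset.mem_inter.mp hs).1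
      have htA : t ∈ A := (Finset.mem_inter.mp htB).1
      have hm : t + s = m := by omega
      exact hmA (hm ▸ hsum t s htA hsA (by omega))
    have hcardimg : (B.image (fun s => m - s)).card = B.card :=
      Finset.card_image_of_injective B (fun u v h => by omega)
    have hunion : (B ∪ B.image (fun s => m - s)).card ≤ (Finset.Icc 0 m).card :=
      Finset.card_le_card (Finset.union_subset hBsub himg)
    rw [Finset.card_union_of_disjoint hdisj, hcardimg, Int.card_Icc] at hunion
    omega
  intro x hx0 hxa
  -- Main inequality: 2 * c(x) ≤ x + 2
  have hc2 : 2 * ((A ∩ Finset.Icc 0 x).card : ℤ) ≤ x + 2 := by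
    by_cases hxa' : x ≤ a - 1
    · -- take the least gap m ≥ x
      set S := (Finset.Icc x (a - 1)).filter (fun y => y ∉ A) with hS
      have hne : S.Nonempty := ⟨a - 1, by
        simp only [hS, Finset.mem_filter, Finset.mem_Icc]
        exact ⟨⟨hxa', le_refl _⟩, h2⟩⟩
      set m := S.min' hne with hm
      have hmS : m ∈ S := Finset.min'_mem S hne
      simp only [hS, Finset.mem_filter, Finset.mem_Icc] at hmS
      obtain ⟨⟨hxm, hma1⟩, hmA⟩ := hmS
      have hrun : ∀ y, x ≤ y → y < m → y ∈ A := by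
        intro y hy1 hy2
        by_contra hy
        have hyS : y ∈ S := by
          simp only [hS, Finset.mem_filter, Finset.mem_Icc]
          exact ⟨⟨hy1, by omega⟩, hy⟩
        have := Finset.min'_le S y hyS
        omega
      have hkey := key m (by omega) (by omega) hmA
      -- decompose A ∩ Icc 0 m
      have hdec : A ∩ Finset.Icc 0 m =
          (A ∩ Finset.Icc 0 x) ∪ Finset.Icc (x + 1) (m - 1) := by
        ext y
        simp only [Finset.mem_union, Finset.mem_inter, Finset.mem_Icc]
        constructor
        · rintro ⟨hyA, hy0, hym⟩
          by_cases hyx : y ≤ x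
          · exact Or.inl ⟨hyA, hy0, hyx⟩
          · refine Or.inr ⟨by omega, ?_⟩
            have : y ≠ m := fun h => hmA (h ▸ hyA)
            omega
        · rintro (⟨hyA, hy0, hyx⟩ | ⟨hy1, hy2⟩)
          · exact ⟨hyA, hy0, by omega⟩
          · exact ⟨hrun y (by omega) (by omega), by omega, by omega⟩
      have hdisj2 : Disjoint (A ∩ Finset.Icc 0 x) (Finset.Icc (x + 1) (m - 1)) := by
        rw [Finset.disjoint_left]
        intro y hy1 hy2
        have := (Finset.mem_Icc.mp (Finset.mem_inter.mp hy1).2).2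
        have := (Finset.mem_Icc.mp hy2).1
        omega
      have hcards : (A ∩ Finset.Icc 0 m).card =
          (A ∩ Finset.Icc 0 x).card + (Finset.Icc (x + 1) (m - 1)).card := by
        rw [hdec, Finset.card_union_of_disjoint hdisj2]
      rw [hcards, Int.card_Icc] at hkey
      omega
    · -- x = a
      have hxe : x = a := by omega
      rw [hxe]
      by_cases hA1 : 1 ≤ a
      · have hkey := key (a - 1) (by omega) (by omega) h2
        have hdec : A ∩ Finset.Icc 0 a = insert a (A ∩ Finset.Icc 0 (a - 1)) := by
          ext y
          simp only [Finset.mem_insert, Finset.mem_inter, Finset.mem_Icc]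
          constructor
          · rintro ⟨hyA, hy0, hya⟩
            by_cases hy : y = a
            · exact Or.inl hy
            · exact Or.inr ⟨hyA, hy0, by omega⟩
          · rintro (rfl | ⟨hyA, hy0, hya⟩)
            · exact ⟨ha.1, ha0, le_refl _⟩
            · exact ⟨hyA, hy0, by omega⟩
        have hnotmem : a ∉ A ∩ Finset.Icc 0 (a - 1) := by
          simp only [Finset.mem_inter, Finset.mem_Icc]
          rintro ⟨-, -, h⟩
          omega
        rw [hdec, Finset.card_insert_of_notMem hnotmem] at *
        push_cast
        omega
      · -- a = 0
        have hae : a = 0 := by omega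
        subst hae
        have hsub : A ∩ Finset.Icc 0 0 ⊆ {0} := by
          intro y hy
          simp only [Finset.mem_inter, Finset.mem_Icc] at hy
          simp only [Finset.mem_singleton]
          omega
        have := Finset.card_le_card hsub
        simp only [Finset.card_singleton] at this
        omega
  rw [Int.le_ceil_iff]
  have hq : (2 : ℚ) * ((A ∩ Finset.Icc 0 x).card : ℚ) ≤ (x : ℚ) + 2 := by
    exact_mod_cast hc2
  push_cast
  linarith
end

section
/- Let A be a finite set of integers with |A| = k and let x > max(A). Suppose that x is involved in an additive relation with elements of A, i.e., a + x = a' + a'' for some a, a', a'' ∈ A. Then 2 ≤ |2(A ∪ {x})| − |2A| ≤ k. -/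
open Finset Pointwise

/-- If `|A| = k`, `x > max A` and `x` is involved in an additive
relation `a + x = a' + a''` with elements of `A`, then
`2 ≤ |2(A ∪ {x})| − |2A| ≤ k`. -/
theorem doubling_increment_bounds
    (A : Finset ℤ) (k : ℕ) (hk : A.card = k) (x : ℤ) (hx : ∀ a ∈ A, a < x)
    (hrel : ∃ a ∈ A, ∃ a' ∈ A, ∃ a'' ∈ A, a + x = a' + a'') :
    2 ≤ (((insert x A) + (insert x A)).card : ℤ) - ((A + A).card : ℤ) ∧
      (((insert x A) + (insert x A)).card : ℤ) - ((A + A).card : ℤ) ≤ (k : ℤ) := by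
  obtain ⟨a, ha, a', ha', a'', ha'', hrel⟩ := hrel
  have hAne : A.Nonempty := ⟨a, ha⟩
  set m := A.max' hAne with hm
  have hmA : m ∈ A := A.max'_mem hAne
  have hle : ∀ b ∈ A, b ≤ m := fun b hb => A.le_max' b hb
  have hmx : m < x := hx m hmA
  set S := A + A with hS
  set T := A.image (fun b => x + b) with hT
  have hTcard : T.card = k := by
    rw [hT, card_image_of_injective _ (add_right_injective x), hk]
  have hBB : insert x A + insert x A = S ∪ insert (x + x) T := by
    ext z
    simp only [hS, hT, Finset.mem_add, mem_insert, mem_union, mem_image]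
    constructor
    · rintro ⟨u, hu, v, hv, rfl⟩
      rcases hu with rfl | hu <;> rcases hv with rfl | hv
      · right; left; rfl
      · right; right; exact ⟨v, hv, rfl⟩
      · right; right; exact ⟨u, hu, by ring⟩
      · left; exact ⟨u, hu, v, hv, rfl⟩
    · rintro (⟨u, hu, v, hv, rfl⟩ | rfl | ⟨u, hu, rfl⟩)
      · exact ⟨u, Or.inr hu, v, Or.inr hv, rfl⟩
      · exact ⟨x, Or.inl rfl, x, Or.inl rfl, rfl⟩
      · exact ⟨x, Or.inl rfl, u, Or.inr hu, rfl⟩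
  have hSle : ∀ z ∈ S, z ≤ m + m := by
    rintro z hz
    rw [hS, Finset.mem_add] at hz
    obtain ⟨u, hu, v, hv, rfl⟩ := hz
    exact add_le_add (hle u hu) (hle v hv)
  have hxxS : (x + x) ∉ S := fun h => absurd (hSle _ h) (by linarith)
  have hxxT : (x + x) ∉ T := by
    rw [hT]
    simp only [mem_image, not_exists]
    rintro b ⟨hb, h⟩
    have : b = x := by linarith [add_left_cancel h]
    exact absurd (hx b hb) (by omega)
  -- rewrite the union
  have hsd : insert (x + x) T \ S = insert (x + x) (T \ S) :=
    insert_sdiff_of_notMem _ hxxS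
  have hcard : (insert x A + insert x A).card = S.card + ((T \ S).card + 1) := by
    rw [hBB, union_comm, ← card_sdiff_add_card, hsd,
      card_insert_of_notMem (fun h => hxxT (mem_sdiff.mp h).1)]
    ring
  -- lower bound for (T \ S).card
  have hlow : 1 ≤ (T \ S).card := by
    have hxm : x + m ∈ T \ S := by
      rw [mem_sdiff]
      constructor
      · rw [hT]; exact mem_image_of_mem _ hmA
      · intro h; exact absurd (hSle _ h) (by linarith)
    exact card_pos.mpr ⟨x + m, hxm⟩
  -- upper bound
  have hxaT : x + a ∈ T := by rw [hT]; exact mem_image_of_mem _ ha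
  have hxaS : x + a ∈ S := by
    rw [hS, Finset.mem_add]
    exact ⟨a', ha', a'', ha'', by linarith⟩
  have hsub : T \ S ⊆ T.erase (x + a) := by
    intro z hz
    rw [mem_sdiff] at hz
    rw [mem_erase]
    exact ⟨fun h => hz.2 (h ▸ hxaS), hz.1⟩
  have hup : (T \ S).card ≤ T.card - 1 := by
    calc (T \ S).card ≤ (T.erase (x + a)).card := card_le_card hsub
    _ = T.card - 1 := card_erase_of_mem hxaT
  have hTpos : 1 ≤ T.card := card_pos.mpr ⟨x + a, hxaT⟩
  constructor
  · rw [hcard]; push_cast; omega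
  · rw [hcard]; rw [hTcard] at hup hTpos; push_cast; omega
end

section
/- Let A be a finite set of integers in normal form with |A| = k, and let x be an odd integer with x ∈ 2A \ A. Let C = (2·A) ∪ {x}, where 2·A = {2a : a ∈ A}. Then |2C| = |2A| + k. -/
open Finset Pointwise

/-- For a set `A` of integers in normal form with `|A| = k` and an
odd `x ∈ 2A \ A`, the set `C = (2·A) ∪ {x}` satisfies `|2C| = |2A| + k`. -/
theorem card_sumset_Dx
    (A : Finset ℤ) (k : ℕ)
    (h0 : 0 ∈ A) (hnn : ∀ y ∈ A, 0 ≤ y) (hgcd : A.gcd id = 1)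
    (hk : A.card = k) (x : ℤ) (hodd : Odd x) (hx2A : x ∈ A + A) (hxA : x ∉ A) :
    ((insert x (A.image (fun a => 2 * a))) + (insert x (A.image (fun a => 2 * a)))).card
      = (A + A).card + k := by
  set D := A.image (fun a => 2 * a) with hD
  have hset : (insert x D) + (insert x D) = (D + D) ∪ D.image (fun d => x + d) := by
    ext z
    simp only [Finset.mem_add, Finset.mem_insert, Finset.mem_union, Finset.mem_image, hD]
    constructor
    · rintro ⟨a, (rfl | ha), b, (rfl | hb), rfl⟩
      · obtain ⟨u, hu, v, hv, rfl⟩ := Finset.mem_add.mp hx2A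
        exact Or.inl ⟨_, ⟨u, hu, rfl⟩, _, ⟨v, hv, rfl⟩, by ring⟩
      · exact Or.inr ⟨b, hb, rfl⟩
      · obtain ⟨u, hu, rfl⟩ := ha
        exact Or.inr ⟨_, ⟨u, hu, rfl⟩, by ring⟩
      · exact Or.inl ⟨a, ha, b, hb, rfl⟩
    · rintro (⟨a, ha, b, hb, rfl⟩ | ⟨d, hd, rfl⟩)
      · exact ⟨a, Or.inr ha, b, Or.inr hb, rfl⟩
      · exact ⟨x, Or.inl rfl, d, Or.inr hd, rfl⟩
  have hDD : D + D = (A + A).image (fun a => 2 * a) := by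
    ext z
    simp only [Finset.mem_add, Finset.mem_image, hD]
    constructor
    · rintro ⟨_, ⟨a, ha, rfl⟩, _, ⟨b, hb, rfl⟩, rfl⟩
      exact ⟨a + b, ⟨a, ha, b, hb, rfl⟩, by ring⟩
    · rintro ⟨_, ⟨a, ha, b, hb, rfl⟩, rfl⟩
      exact ⟨_, ⟨a, ha, rfl⟩, _, ⟨b, hb, rfl⟩, by ring⟩
  have hinj : Function.Injective (fun a : ℤ => 2 * a) := fun a b h => by
    simpa using h
  have hdisj : Disjoint (D + D) (D.image (fun d => x + d)) := by
    rw [Finset.disjoint_left]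
    intro z hz hz'
    rw [hDD, Finset.mem_image] at hz
    obtain ⟨s, _, rfl⟩ := hz
    rw [Finset.mem_image] at hz'
    obtain ⟨d, hd, h⟩ := hz'
    rw [hD, Finset.mem_image] at hd
    obtain ⟨a, _, rfl⟩ := hd
    obtain ⟨m, hm⟩ := hodd
    omega
  rw [hset, Finset.card_union_of_disjoint hdisj, hDD,
    Finset.card_image_of_injective _ hinj,
    Finset.card_image_of_injective _ (fun a b h => by simpa using h : Function.Injective (fun d : ℤ => x + d)),
    hD, Finset.card_image_of_injective _ hinj, hk]
end

section
/- For each k ≥ 4 and each T with 2k−1 ≤ T ≤ C(k,2)+2, there exists a finite set A of integers in normal form with |A| = k, |2A| = T, and max(A) = μ(k,T), where μ(k,T) = 2^{c(k,T)−2}(k − c(k,T) + b(k,T) + 1). -/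
open Finset Pointwise



lemma base_construction (s b : ℕ) (hs : 2 ≤ s) (hb : b ≤ s - 2) :
    ∃ A : Finset ℕ, 0 ∈ A ∧ 1 ∈ A ∧ A.card = s + 1 ∧
      (A + A).card = 2 * s + b + 1 ∧ (s + b) ∈ A ∧ (∀ x ∈ A, x ≤ s + b) := by
  refine ⟨insert (s + b) (Finset.range s), ?_, ?_, ?_, ?_, ?_, ?_⟩
  · simp; omega
  · simp; omega
  · rw [Finset.card_insert_of_notMem (by simp), Finset.card_range]
  · have hEq : insert (s + b) (Finset.range s) + insert (s + b) (Finset.range s)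
        = insert (2 * (s + b)) (Finset.range (2 * s + b)) := by
      ext t
      simp only [Finset.mem_add, Finset.mem_insert, Finset.mem_range]
      constructor
      · rintro ⟨y, hy, z, hz, rfl⟩
        omega
      · rintro (rfl | ht)
        · exact ⟨s + b, Or.inl rfl, s + b, Or.inl rfl, by ring⟩
        · by_cases h : t ≤ 2 * s - 2
          · exact ⟨min t (s - 1), Or.inr (by omega), t - min t (s - 1), Or.inr (by omega), by omega⟩
          · exact ⟨s + b, Or.inl rfl, t - (s + b), Or.inr (by omega), by omega⟩
    rw [hEq, Finset.card_insert_of_notMem (by simp; omega), Finset.card_range]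
  · simp
  · intro x hx; simp at hx; omega


lemma step_construction (A : Finset ℕ) (M : ℕ) (h0 : 0 ∈ A) (hM : M ∈ A)
    (hmax : ∀ x ∈ A, x ≤ M) (hpos : 0 < M) :
    (insert (2 * M) A).card = A.card + 1 ∧
    (insert (2 * M) A + insert (2 * M) A).card = (A + A).card + A.card := by
  have h2M : 2 * M ∉ A := fun h => by have := hmax _ h; omega
  constructor
  · rw [Finset.card_insert_of_notMem h2M]
  · have hEq : insert (2 * M) A + insert (2 * M) A
        = insert (4 * M) ((A + A) ∪ (A.erase 0).image (fun x => x + 2 * M)) := by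
      ext t
      simp only [Finset.mem_add, Finset.mem_insert, Finset.mem_union, Finset.mem_image,
        Finset.mem_erase]
      constructor
      · rintro ⟨y, hy, z, hz, rfl⟩
        rcases hy with rfl | hy <;> rcases hz with rfl | hz
        · left; ring
        · by_cases hz0 : z = 0
          · subst hz0; right; left; exact ⟨M, hM, M, hM, by ring⟩
          · right; right; exact ⟨z, ⟨hz0, hz⟩, by ring⟩
        · by_cases hy0 : y = 0
          · subst hy0; right; left; exact ⟨M, hM, M, hM, by ring⟩
          · right; right; exact ⟨y, ⟨hy0, hy⟩, by ring⟩
        · right; left; exact ⟨y, hy, z, hz, rfl⟩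
      · rintro (rfl | ⟨y, hy, z, hz, rfl⟩ | ⟨x, ⟨hx0, hx⟩, rfl⟩)
        · exact ⟨2 * M, Or.inl rfl, 2 * M, Or.inl rfl, by ring⟩
        · exact ⟨y, Or.inr hy, z, Or.inr hz, rfl⟩
        · exact ⟨x, Or.inr hx, 2 * M, Or.inl rfl, rfl⟩
    rw [hEq]
    have hbound : ∀ u ∈ A + A, u ≤ 2 * M := by
      intro u hu
      rw [Finset.mem_add] at hu
      obtain ⟨y, hy, z, hz, rfl⟩ := hu
      have := hmax _ hy; have := hmax _ hz; omega
    have hdisj : Disjoint (A + A) ((A.erase 0).image (fun x => x + 2 * M)) := by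
      rw [Finset.disjoint_left]
      rintro u hu hu'
      simp only [Finset.mem_image, Finset.mem_erase] at hu'
      obtain ⟨x, ⟨hx0, _⟩, rfl⟩ := hu'
      have := hbound _ hu; omega
    have h4M : 4 * M ∉ (A + A) ∪ (A.erase 0).image (fun x => x + 2 * M) := by
      rw [Finset.mem_union]
      rintro (h | h)
      · have := hbound _ h; omega
      · simp only [Finset.mem_image, Finset.mem_erase] at h
        obtain ⟨x, ⟨_, hx⟩, hx4⟩ := h
        have := hmax _ hx; omega
    rw [Finset.card_insert_of_notMem h4M, Finset.card_union_of_disjoint hdisj,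
      Finset.card_image_of_injective _ (add_left_injective _), Finset.card_erase_of_mem h0]
    have : 1 ≤ A.card := Finset.card_pos.mpr ⟨0, h0⟩
    omega


lemma grow_construction (s b : ℕ) (hs : 2 ≤ s) (hb : b ≤ s - 2) (j : ℕ) :
    ∃ A : Finset ℕ, 0 ∈ A ∧ 1 ∈ A ∧ A.card = s + 1 + j ∧
      2 * (A + A).card = 4 * s + 2 * b + 2 + j * (2 * s + j + 1) ∧
      2 ^ j * (s + b) ∈ A ∧ (∀ x ∈ A, x ≤ 2 ^ j * (s + b)) := by
  induction j with
  | zero =>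
    obtain ⟨A, h0, h1, hcard, hsum, hMmem, hMmax⟩ := base_construction s b hs hb
    refine ⟨A, h0, h1, by omega, by omega, by simpa using hMmem, by simpa using hMmax⟩
  | succ j ih =>
    obtain ⟨A, h0, h1, hcard, hsum, hMmem, hMmax⟩ := ih
    set M := 2 ^ j * (s + b) with hMdef
    have hpos : 0 < M := by positivity
    obtain ⟨hc1, hc2⟩ := step_construction A M h0 hMmem hMmax hpos
    refine ⟨insert (2 * M) A, Finset.mem_insert_of_mem h0, Finset.mem_insert_of_mem h1, ?_, ?_, ?_, ?_⟩
    · rw [hc1, hcard]; omega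
    · rw [hc2]; rw [hcard] at *; ring_nf; ring_nf at hsum ⊢; omega
    · have : 2 ^ (j + 1) * (s + b) = 2 * M := by rw [hMdef]; ring
      rw [this]; exact Finset.mem_insert_self _ _
    · intro x hx
      have h2 : 2 ^ (j + 1) * (s + b) = 2 * M := by rw [hMdef]; ring
      rcases Finset.mem_insert.mp hx with rfl | hx
      · omega
      · have := hMmax _ hx; omega

/-- For each `k ≥ 4` and `T ∈ [2k−1, C(k,2)+2]` (with `c = c(k,T)`,
`b = b(k,T)` given by the canonical parametrization of `T`), there is a set `A` of
integers in normal form with `|A| = k`, `|2A| = T` and `max A = μ(k,T) =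
2^(c−2)(k−c+b+1)`. -/
theorem exists_extremal_set_with_max_mu
    (k T c b : ℕ) (hk : 4 ≤ k) (hT1 : 2 * k - 1 ≤ T) (hT2 : T ≤ k.choose 2 + 2)
    (hcb : (2 ≤ c ∧ c ≤ k - 2 ∧ 1 ≤ b ∧ b ≤ k - c - 1) ∨ (c = 2 ∧ b = 0))
    (hTcb : T = c * k - (c + 1).choose 2 + b + 2) :
    ∃ A : Finset ℤ, 0 ∈ A ∧ (∀ y ∈ A, 0 ≤ y) ∧ A.gcd id = 1 ∧
      A.card = k ∧ (A + A).card = T ∧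
      IsGreatest (A : Set ℤ) ((2 ^ (c - 2) * (k - c + b + 1) : ℕ) : ℤ) := by
  have hc2 : 2 ≤ c := by rcases hcb with ⟨h, _⟩ | ⟨h, _⟩ <;> omega
  have hck : c ≤ k - 2 := by rcases hcb with ⟨_, h, _⟩ | ⟨h, _⟩ <;> omega
  have hbk : b ≤ k - c - 1 := by rcases hcb with ⟨_, _, _, h⟩ | ⟨_, h⟩ <;> omega
  set j := c - 2 with hj
  set d := k - c with hd
  have hc : c = j + 2 := by omega
  have hkd : k = j + 2 + d := by omega
  have hd2 : 2 ≤ d := by omega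
  obtain ⟨A, h0, h1, hcard, hsum, hMmem, hMmax⟩ :=
    grow_construction (d + 1) b (by omega) (by omega) j
  -- arithmetic: (A + A).card = T
  obtain ⟨r, hr⟩ : Even (j * (j + 1)) := Nat.even_mul_succ_self j
  have hchoose : (c + 1).choose 2 = r + 2 * j + 3 := by
    rw [Nat.choose_two_right]
    have e : (c + 1) * (c + 1 - 1) = j * (j + 1) + 4 * j + 6 := by
      simp only [Nat.add_sub_cancel]; rw [hc]; ring
    omega
  have hid : 4 * (d + 1) + 2 * b + 2 + j * (2 * (d + 1) + j + 1)
      + (j * (j + 1) + 4 * j + 6) = 2 * (c * k) + 2 * b + 4 := by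
    rw [hc, hkd]; ring
  have hsumT : (A + A).card = T := by omega
  -- transfer to ℤ
  refine ⟨A.image (Nat.cast : ℕ → ℤ), ?_, ?_, ?_, ?_, ?_, ?_⟩
  · exact Finset.mem_image.mpr ⟨0, h0, by simp⟩
  · rintro y hy
    obtain ⟨n, _, rfl⟩ := Finset.mem_image.mp hy
    exact Int.natCast_nonneg n
  · have h1' : (1 : ℤ) ∈ A.image (Nat.cast : ℕ → ℤ) :=
      Finset.mem_image.mpr ⟨1, h1, by simp⟩
    have hdvd : (A.image (Nat.cast : ℕ → ℤ)).gcd id ∣ 1 := Finset.gcd_dvd h1'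
    rcases Int.isUnit_iff.mp (isUnit_of_dvd_one hdvd) with h | h
    · exact h
    · exfalso
      have hn := Finset.normalize_gcd (s := A.image (Nat.cast : ℕ → ℤ)) (f := id)
      rw [h, Int.normalize_of_nonpos (by norm_num)] at hn
      norm_num at hn
  · rw [Finset.card_image_of_injective _ Nat.cast_injective, hcard]; omega
  · have himg : ((A + A).image (Nat.cast : ℕ → ℤ))
        = A.image Nat.cast + A.image Nat.cast := by
      exact Finset.image_add (f := Nat.castAddMonoidHom ℤ)
    rw [← himg, Finset.card_image_of_injective _ Nat.cast_injective, hsumT]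
  · have hMeq : 2 ^ j * (k - c + b + 1) = 2 ^ j * (d + 1 + b) := by
      congr 1; omega
    constructor
    · rw [hMeq]
      exact Finset.mem_coe.mpr (Finset.mem_image.mpr ⟨2 ^ j * (d + 1 + b), hMmem, by push_cast; ring⟩)
    · rintro y hy
      obtain ⟨n, hn, rfl⟩ := Finset.mem_image.mp (Finset.mem_coe.mp hy)
      rw [hMeq]
      exact_mod_cast hMmax n hn
end

section
/- For each k ≥ 4 and each b with 1 ≤ b ≤ k−3, the set A = {0} ∪ [b+1, k+b−1] (the integers from b+1 to k+b−1 together with 0) satisfies |A| = k and |2A| = 2k−1+b. -/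
open Finset Pointwise

/-- For `1 ≤ b ≤ k−3` the set `A = {0} ∪ [b+1, k+b−1]` satisfies
`|A| = k` and `|2A| = 2k−1+b`. -/
theorem extremal_example_card_and_doubling
    (k b : ℤ) (hk : 4 ≤ k) (hb1 : 1 ≤ b) (hb2 : b ≤ k - 3) :
    (((insert (0 : ℤ) (Finset.Icc (b + 1) (k + b - 1))).card : ℤ) = k) ∧
      ((((insert (0 : ℤ) (Finset.Icc (b + 1) (k + b - 1)))
          + (insert (0 : ℤ) (Finset.Icc (b + 1) (k + b - 1)))).card : ℤ)
        = 2 * k - 1 + b) := by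
  have hset : insert (0:ℤ) (Finset.Icc (b+1) (k+b-1)) + insert (0:ℤ) (Finset.Icc (b+1) (k+b-1))
      = insert (0:ℤ) (Finset.Icc (b+1) (2*k+2*b-2)) := by
    ext x
    simp only [Finset.mem_add, Finset.mem_insert, Finset.mem_Icc]
    constructor
    · rintro ⟨y, hy, z, hz, rfl⟩; omega
    · rintro (rfl | hx)
      · exact ⟨0, Or.inl rfl, 0, Or.inl rfl, by ring⟩
      · by_cases h : x ≤ k+b-1
        · exact ⟨0, Or.inl rfl, x, Or.inr ⟨by omega, by omega⟩, by ring⟩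
        · by_cases h2 : x ≤ k+2*b
          · exact ⟨b+1, Or.inr ⟨by omega, by omega⟩, x-(b+1), Or.inr ⟨by omega, by omega⟩, by ring⟩
          · exact ⟨x-(k+b-1), Or.inr ⟨by omega, by omega⟩, k+b-1, Or.inr ⟨by omega, by omega⟩, by ring⟩
  have h1 : ((insert (0:ℤ) (Finset.Icc (b+1) (k+b-1))).card : ℤ) = k := by
    rw [Finset.card_insert_of_notMem (by simp; omega), Int.card_Icc]
    push_cast
    omega
  refine ⟨h1, ?_⟩
  rw [hset, Finset.card_insert_of_notMem (by simp; omega), Int.card_Icc]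
  push_cast
  omega
end

section
/- Let A = A_1 ∘ P ∘ A_2 be a finite set of integers in normal form, where A_1 is stable, A_2 is right stable (its reflexion is stable), and P is a segment (interval of consecutive integers) with |P| ≥ 3. Let a = max(A), a_1 = max(A_1), a_2 = max(A_2). Then 2A = A_1 ∘ Y ∘ A_2 for some set Y; i.e., 2A ∩ [0, a_1] = A_1 and 2A ∩ [2a − a_2, 2a] = (2a − a_2) + A_2. -/
open Finset Pointwise

/-- A finite set `X` of nonnegative integers with `0 ∈ X` is *stable* if
`2X ∩ [0, max X] = X` and neither `1` nor `max X − 1` belongs to `X`. -/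
def IsStable (X : Finset ℤ) : Prop :=
  0 ∈ X ∧ (∀ x ∈ X, 0 ≤ x) ∧
    ∃ M : ℤ, IsGreatest (X : Set ℤ) M ∧
      (X + X) ∩ Finset.Icc 0 M = X ∧ (1 : ℤ) ∉ X ∧ M - 1 ∉ X

/-- `X` is *right stable* if its reflexion `−X + max X` is stable. -/
def IsRightStable (X : Finset ℤ) : Prop :=
  ∃ M : ℤ, IsGreatest (X : Set ℤ) M ∧ IsStable (X.image (fun t => M - t))

/-- If `A = A₁ ∘ P ∘ A₂` is in normal form with `A₁` stable,
`A₂` right stable and `P` a segment with `|P| ≥ 3`, then `2A = A₁ ∘ Y ∘ A₂` for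
some set `Y`; i.e. `2A ∩ [0, a₁] = A₁` and `2A ∩ [2a − a₂, 2a] = (2a − a₂) + A₂`,
where `a = max A`, `a₁ = max A₁`, `a₂ = max A₂`. -/
theorem sumset_of_stable_decomposition
    (A₁ A₂ : Finset ℤ) (p a₁ a₂ : ℤ)
    (hs1 : IsStable A₁) (hs2 : IsRightStable A₂)
    (h0₂ : 0 ∈ A₂) (hnn₂ : ∀ x ∈ A₂, 0 ≤ x)
    (ha₁ : IsGreatest (A₁ : Set ℤ) a₁) (ha₂ : IsGreatest (A₂ : Set ℤ) a₂)
    (hp : 2 ≤ p)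
    (A : Finset ℤ)
    (hA : A = A₁ ∪ Finset.Icc a₁ (a₁ + p) ∪ A₂.image (fun t => a₁ + p + t))
    (hgcd : A.gcd id = 1) :
    (A + A) ∩ Finset.Icc 0 a₁ = A₁ ∧
      (A + A) ∩ Finset.Icc (2 * (a₁ + p + a₂) - a₂) (2 * (a₁ + p + a₂))
        = A₂.image (fun t => 2 * (a₁ + p + a₂) - a₂ + t) := by
  obtain ⟨h0₁, hnn₁, M, hM, hstab₁, -, -⟩ := hs1
  have hMa₁ : M = a₁ := hM.unique ha₁
  rw [hMa₁] at hstab₁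
  obtain ⟨M₂, hM₂, h0B, hnnB, M', hM', hstabB, -, -⟩ := hs2
  have hM₂a₂ : M₂ = a₂ := hM₂.unique ha₂
  rw [hM₂a₂] at h0B hnnB hM' hstabB
  have hM'a₂ : M' = a₂ := by
    apply hM'.unique
    constructor
    · simp only [Finset.coe_image, Set.mem_image, Finset.mem_coe]
      exact ⟨0, h0₂, by ring⟩
    · rintro x hx
      simp only [Finset.coe_image, Set.mem_image, Finset.mem_coe] at hx
      obtain ⟨t, ht, rfl⟩ := hx
      have := hnn₂ t ht; linarith
  rw [hM'a₂] at hstabB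
  have ha₁0 : (0:ℤ) ≤ a₁ := ha₁.2 h0₁
  have ha₂0 : (0:ℤ) ≤ a₂ := ha₂.2 h0₂
  subst hA
  have hmemA : ∀ w, w ∈ A₁ ∪ Finset.Icc a₁ (a₁ + p) ∪ A₂.image (fun t => a₁ + p + t) ↔
      w ∈ A₁ ∨ (a₁ ≤ w ∧ w ≤ a₁ + p) ∨ ∃ t ∈ A₂, a₁ + p + t = w := by
    intro w
    simp only [Finset.mem_union, Finset.mem_Icc, Finset.mem_image, or_assoc]
  have hAnn : ∀ w ∈ A₁ ∪ Finset.Icc a₁ (a₁ + p) ∪ A₂.image (fun t => a₁ + p + t), 0 ≤ w := by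
    intro w hw
    rcases (hmemA w).1 hw with h | ⟨h1, h2⟩ | ⟨t, ht, rfl⟩
    · exact hnn₁ w h
    · linarith
    · have := hnn₂ t ht; linarith
  have hlow : ∀ w ∈ A₁ ∪ Finset.Icc a₁ (a₁ + p) ∪ A₂.image (fun t => a₁ + p + t),
      w ≤ a₁ → w ∈ A₁ := by
    intro w hw hle
    rcases (hmemA w).1 hw with h | ⟨h1, h2⟩ | ⟨t, ht, rfl⟩
    · exact h
    · have : w = a₁ := le_antisymm hle h1
      exact this ▸ ha₁.1
    · have := hnn₂ t ht; linarith
  have hup : ∀ w ∈ A₁ ∪ Finset.Icc a₁ (a₁ + p) ∪ A₂.image (fun t => a₁ + p + t),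
      w ≤ a₁ + p + a₂ := by
    intro w hw
    rcases (hmemA w).1 hw with h | ⟨h1, h2⟩ | ⟨t, ht, rfl⟩
    · have := ha₁.2 h; linarith
    · linarith
    · have := ha₂.2 ht; linarith
  have hhigh : ∀ w ∈ A₁ ∪ Finset.Icc a₁ (a₁ + p) ∪ A₂.image (fun t => a₁ + p + t),
      a₁ + p ≤ w → ∃ t ∈ A₂, a₁ + p + t = w := by
    intro w hw hge
    rcases (hmemA w).1 hw with h | ⟨h1, h2⟩ | ⟨t, ht, rfl⟩
    · have := ha₁.2 h; linarith
    · exact ⟨0, h0₂, by omega⟩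
    · exact ⟨t, ht, rfl⟩
  constructor
  · ext z
    simp only [Finset.mem_inter, Finset.mem_Icc]
    constructor
    · rintro ⟨hz, hz0, hza₁⟩
      rw [Finset.mem_add] at hz
      obtain ⟨x, hx, y, hy, rfl⟩ := hz
      have hx0 := hAnn x hx
      have hy0 := hAnn y hy
      have hx1 : x ∈ A₁ := hlow x hx (by linarith)
      have hy1 : y ∈ A₁ := hlow y hy (by linarith)
      have : x + y ∈ (A₁ + A₁) ∩ Finset.Icc 0 a₁ := by
        rw [Finset.mem_inter, Finset.mem_Icc, Finset.mem_add]
        exact ⟨⟨x, hx1, y, hy1, rfl⟩, hz0, hza₁⟩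
      rwa [hstab₁] at this
    · intro hz
      refine ⟨?_, hnn₁ z hz, ha₁.2 hz⟩
      rw [Finset.mem_add]
      refine ⟨z, (hmemA z).2 (Or.inl hz), 0, (hmemA 0).2 (Or.inl h0₁), by ring⟩
  · ext z
    simp only [Finset.mem_inter, Finset.mem_Icc, Finset.mem_image]
    constructor
    · rintro ⟨hz, hzlo, hzhi⟩
      rw [Finset.mem_add] at hz
      obtain ⟨x, hx, y, hy, rfl⟩ := hz
      have hxu := hup x hx
      have hyu := hup y hy
      obtain ⟨s, hs, rfl⟩ := hhigh x hx (by linarith)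
      obtain ⟨t, ht, rfl⟩ := hhigh y hy (by linarith)
      have hsle := ha₂.2 hs
      have htle := ha₂.2 ht
      have hst : a₂ ≤ s + t := by linarith
      have hmem : (a₂ - s) + (a₂ - t) ∈
          (A₂.image (fun t => a₂ - t) + A₂.image (fun t => a₂ - t)) ∩ Finset.Icc 0 a₂ := by
        rw [Finset.mem_inter, Finset.mem_Icc, Finset.mem_add]
        refine ⟨⟨a₂ - s, Finset.mem_image_of_mem _ hs, a₂ - t,
          Finset.mem_image_of_mem _ ht, rfl⟩, by linarith, by linarith⟩
      rw [hstabB] at hmem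
      rw [Finset.mem_image] at hmem
      obtain ⟨u, hu, hue⟩ := hmem
      exact ⟨u, hu, by omega⟩
    · rintro ⟨u, hu, rfl⟩
      have hule := ha₂.2 hu
      have hu0 := hnn₂ u hu
      refine ⟨?_, by linarith, by linarith⟩
      rw [Finset.mem_add]
      refine ⟨a₁ + p + a₂, (hmemA _).2 (Or.inr (Or.inr ⟨a₂, ha₂.1, rfl⟩)),
        a₁ + p + u, (hmemA _).2 (Or.inr (Or.inr ⟨u, hu, rfl⟩)), by ring⟩
end

section
/- Let A ⊂ ℤ be a finite set in normal form with one-dimensional additive dimension, and let x > max(A). Then A ∪ {x} is one-dimensional if and only if x ∈ 2A − A. -/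
open Finset Pointwise

/-- `φ` is a Freiman isomorphism from `A` onto `B`. -/
def IsFreimanIso {G G' : Type*} [AddCommGroup G] [AddCommGroup G']
    (A : Finset G) (B : Finset G') (φ : G → G') : Prop :=
  Set.BijOn φ (A : Set G) (B : Set G') ∧
    ∀ x ∈ A, ∀ y ∈ A, ∀ z ∈ A, ∀ t ∈ A,
      (x + y = z + t ↔ φ x + φ y = φ z + φ t)

/-- `B ⊆ ℤ^d` is not contained in a hyperplane: no nonzero linear functional is
constant on `B`. -/
def NotInHyperplane {d : ℕ} (B : Finset (Fin d → ℤ)) : Prop :=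
  ∀ (f : (Fin d → ℤ) →+ ℤ) (c : ℤ), (∀ b ∈ B, f b = c) → f = 0

/-- `A` admits a witness of additive dimension `d`. -/
def HasAddDimWitness (A : Finset ℤ) (d : ℕ) : Prop :=
  ∃ B : Finset (Fin d → ℤ), NotInHyperplane B ∧
    ∃ φ : ℤ → (Fin d → ℤ), IsFreimanIso A B φ

/-- The additive dimension of `A` is `d`. -/
def AddDim (A : Finset ℤ) (d : ℕ) : Prop :=
  HasAddDimWitness A d ∧ ∀ e : ℕ, HasAddDimWitness A e → e ≤ d

lemma hom_eq_zero {d : ℕ} (f : (Fin d → ℤ) →+ ℤ) (h : ∀ i, f (Pi.single i 1) = 0) : f = 0 := by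
  ext v
  simpa using h v

lemma pair_decomp (a b : ℤ) : (![a, b] : Fin 2 → ℤ) = a • Pi.single 0 1 + b • Pi.single 1 1 := by
  funext i
  fin_cases i <;> simp

/-- Let `A` be a one-dimensional set in normal form and
`x > max A`. Then `A ∪ {x}` is one-dimensional if and only if `x ∈ 2A − A`. -/
theorem one_dim_extension_iff
    (A : Finset ℤ) (h0 : 0 ∈ A) (hnn : ∀ y ∈ A, 0 ≤ y) (hgcd : A.gcd id = 1)
    (hdim : AddDim A 1) (x : ℤ) (hx : ∀ a ∈ A, a < x) :
    AddDim (insert x A) 1 ↔ ∃ a ∈ A, ∃ a' ∈ A, ∃ a'' ∈ A, x = a + a' - a'' := by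
  have hx0 : 0 < x := hx 0 h0
  have hxA : x ∉ A := fun h => lt_irrefl x (hx x h)
  obtain ⟨a0, ha0A, ha0⟩ : ∃ a ∈ A, a ≠ 0 := by
    by_contra hc
    push_neg at hc
    have : A.gcd id = 0 := Finset.gcd_eq_zero_iff.2 (by simpa using hc)
    omega
  constructor
  · -- forward: if no representation, build a 2-dimensional witness
    intro hdim'
    by_contra hno
    -- counting function
    set ψ : ℤ → ℤ := fun v => if v = x then 1 else 0 with hψ
    have hψA : ∀ a ∈ A, ψ a = 0 := by
      intro a ha
      have : a ≠ x := fun h => hxA (h ▸ ha)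
      simp [hψ, this]
    have hmem : ∀ p ∈ insert x A, p ≠ x → p ∈ A :=
      fun p hp hne => (mem_insert.1 hp).resolve_left hne
    have hcount : ∀ u ∈ insert x A, ∀ v ∈ insert x A, ∀ w ∈ insert x A, ∀ s ∈ insert x A,
        u + v = w + s → ψ u + ψ v = ψ w + ψ s := by
      intro u hu v hv w hw s hs h
      have fu : u = x ∨ u < x := (mem_insert.1 hu).imp id (hx u)
      have fv : v = x ∨ v < x := (mem_insert.1 hv).imp id (hx v)
      have fw : w = x ∨ w < x := (mem_insert.1 hw).imp id (hx w)
      have fs : s = x ∨ s < x := (mem_insert.1 hs).imp id (hx s)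
      by_cases hux : u = x <;> by_cases hvx : v = x <;>
        by_cases hwx : w = x <;> by_cases hsx : s = x <;>
          simp only [hψ, hux, hvx, hwx, hsx, if_true, if_false, ite_true, ite_false,
            eq_self_iff_true, if_pos, if_neg, not_false_iff] <;>
            first
            | rfl
            | omega
            | (exfalso; apply hno; first
                | exact ⟨w, hmem w hw hwx, s, hmem s hs hsx, v, hmem v hv hvx, by omega⟩
                | exact ⟨w, hmem w hw hwx, s, hmem s hs hsx, u, hmem u hu hux, by omega⟩
                | exact ⟨u, hmem u hu hux, v, hmem v hv hvx, w, hmem w hw hwx, by omega⟩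
                | exact ⟨u, hmem u hu hux, v, hmem v hv hvx, s, hmem s hs hsx, by omega⟩)
    set φ : ℤ → (Fin 2 → ℤ) := fun v => ![v, ψ v] with hφ
    have hφinj : Set.InjOn φ ((insert x A : Finset ℤ) : Set ℤ) := by
      intro u _ v _ h
      have := congrFun h 0
      simpa [hφ] using this
    have hwit : HasAddDimWitness (insert x A) 2 := by
      refine ⟨(insert x A).image φ, ?_, φ, ?_, ?_⟩
      · intro f c hf
        have hval : ∀ v, f (φ v) = v * f (Pi.single 0 1) + ψ v * f (Pi.single 1 1) := by
          intro v
          rw [hφ]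
          simp only
          rw [pair_decomp, map_add, map_zsmul, map_zsmul, smul_eq_mul, smul_eq_mul]
        have hmem : ∀ v ∈ insert x A, f (φ v) = c := fun v hv =>
          hf _ (mem_image_of_mem _ hv)
        have h0' := hmem 0 (mem_insert_of_mem h0)
        have ha' := hmem a0 (mem_insert_of_mem ha0A)
        have hx' := hmem x (mem_insert_self _ _)
        rw [hval] at h0' ha' hx'
        have hc0 : c = 0 := by simpa [hψA 0 h0] using h0'.symm
        have hk0 : f (Pi.single 0 1) = 0 := by
          rw [hψA a0 ha0A, hc0] at ha'
          simpa [ha0] using mul_eq_zero.1 (by linarith : a0 * f (Pi.single 0 1) = 0)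
        have hk1 : f (Pi.single 1 1) = 0 := by
          have : ψ x = 1 := if_pos rfl
          rw [this, hk0, hc0] at hx'
          linarith
        exact hom_eq_zero f (fun i => by fin_cases i <;> assumption)
      · rw [Finset.coe_image]
        exact hφinj.bijOn_image
      · intro u hu v hv w hw s hs
        constructor
        · intro h
          have hcnt := hcount u hu v hv w hw s hs h
          funext i
          fin_cases i <;> simp [hφ, Pi.add_apply] <;> omega
        · intro h
          have := congrFun h 0
          simpa [hφ, Pi.add_apply] using this
    have := hdim'.2 2 hwit
    omega
  · -- backward
    rintro ⟨a, ha, a', ha', a'', ha'', hxe⟩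
    constructor
    · -- identity witness in dimension 1
      set φ : ℤ → (Fin 1 → ℤ) := fun v _ => v with hφ
      have hφinj : Set.InjOn φ ((insert x A : Finset ℤ) : Set ℤ) := by
        intro u _ v _ h
        exact congrFun h 0
      refine ⟨(insert x A).image φ, ?_, φ, ?_, ?_⟩
      · intro f c hf
        have h0' := hf _ (mem_image_of_mem _ (mem_insert_of_mem h0))
        have hx' := hf _ (mem_image_of_mem _ (mem_insert_self x A))
        have hz : φ 0 = 0 := by funext i; rfl
        rw [hz, map_zero] at h0'
        have hxdec : φ x = x • Pi.single 0 1 := by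
          funext i
          have : i = 0 := Subsingleton.elim _ _
          subst this
          simp [hφ]
        rw [hxdec, map_zsmul, smul_eq_mul, ← h0'] at hx'
        have hk : f (Pi.single 0 1) = 0 := by
          rcases mul_eq_zero.1 hx' with h | h
          · omega
          · exact h
        exact hom_eq_zero f (fun i => by
          have : i = 0 := Subsingleton.elim _ _
          subst this; exact hk)
      · rw [Finset.coe_image]
        exact hφinj.bijOn_image
      · intro u hu v hv w hw s hs
        constructor
        · intro h; funext i; simpa [hφ] using h
        · intro h; simpa [hφ] using congrFun h 0
    · -- upper bound: restrict any witness to A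
      rintro e ⟨B, hB, φ, hbij, hrel⟩
      refine hdim.2 e ⟨A.image φ, ?_, φ, ?_, ?_⟩
      · intro f c hf
        refine hB f c ?_
        intro b hb
        obtain ⟨v, hv, rfl⟩ := hbij.surjOn hb
        rcases mem_insert.1 hv with rfl | hvA
        · -- v = x: use the relation x + a'' = a + a'
          have hr : v + a'' = a + a' := by omega
          have := (hrel v (mem_insert_self _ _) a'' (mem_insert_of_mem ha'')
            a (mem_insert_of_mem ha) a' (mem_insert_of_mem ha')).1 hr
          have hfe := congrArg f this
          rw [map_add, map_add] at hfe
          have h1 : f (φ a'') = c := hf _ (mem_image_of_mem _ ha'')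
          have h2 : f (φ a) = c := hf _ (mem_image_of_mem _ ha)
          have h3 : f (φ a') = c := hf _ (mem_image_of_mem _ ha')
          linarith
        · exact hf _ (mem_image_of_mem _ hvA)
      · rw [Finset.coe_image]
        exact (hbij.injOn.mono (by simp [Finset.coe_subset, Finset.subset_insert])).bijOn_image
      · intro u hu v hv w hw s hs
        exact hrel u (mem_insert_of_mem hu) v (mem_insert_of_mem hv)
          w (mem_insert_of_mem hw) s (mem_insert_of_mem hs)
end

section
/- Let A be a finite set of integers in normal form with a = max(A), and let B = A ∪ {2a}. For any x with 3a < x < 4a, |(x + B) ∩ 2B| ≤ 1. -/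
open Finset Pointwise

/-- Let `A` be in normal form with `a = max A` and
`B = A ∪ {2a}`. For any `x` with `3a < x < 4a`, `|(x + B) ∩ 2B| ≤ 1`. -/
theorem translate_inter_doubling_small
    (A : Finset ℤ) (a : ℤ)
    (h0 : 0 ∈ A) (hnn : ∀ y ∈ A, 0 ≤ y) (hgcd : A.gcd id = 1)
    (ha : IsGreatest (A : Set ℤ) a)
    (x : ℤ) (hx1 : 3 * a < x) (hx2 : x < 4 * a) :
    (((insert (2 * a) A).image (fun b => x + b))
        ∩ ((insert (2 * a) A) + (insert (2 * a) A))).card ≤ 1 := by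
  have ha0 : 0 < a := by linarith
  have hBle : ∀ b ∈ insert (2*a) A, b ≤ 2*a := by
    intro b hb
    rcases Finset.mem_insert.1 hb with h | h
    · omega
    · have := ha.2 (show (b:ℤ) ∈ (A:Set ℤ) by exact_mod_cast h); omega
  refine le_trans (Finset.card_le_card (show _ ⊆ ({4*a} : Finset ℤ) from ?_)) (by simp)
  intro y hy
  simp only [Finset.mem_inter, Finset.mem_image, Finset.mem_add] at hy
  obtain ⟨⟨b, hb, rfl⟩, c, hc, d, hd, h⟩ := hy
  have hbA : b ∈ A := by
    rcases Finset.mem_insert.1 hb with h' | h'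
    · exfalso
      have hc2 := hBle c hc; have hd2 := hBle d hd
      omega
    · exact h'
  have hba : b ≤ a := ha.2 (by exact_mod_cast hbA)
  have hb0 : 0 ≤ b := hnn b hbA
  have hc2 := hBle c hc
  have hd2 := hBle d hd
  have hcA : c = 2*a := by
    by_contra hne
    have hcmem : c ∈ A := by
      rcases Finset.mem_insert.1 hc with h'|h'
      · exact absurd h' hne
      · exact h'
    have := ha.2 (show (c:ℤ) ∈ (A:Set ℤ) by exact_mod_cast hcmem)
    omega
  have hdA : d = 2*a := by
    by_contra hne
    have hdmem : d ∈ A := by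
      rcases Finset.mem_insert.1 hd with h'|h'
      · exact absurd h' hne
      · exact h'
    have := ha.2 (show (d:ℤ) ∈ (A:Set ℤ) by exact_mod_cast hdmem)
    omega
  simp only [Finset.mem_singleton]
  omega
end
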